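/- Let c₁ = (p₁, q₁, f₁) with candidate solution u₁ and c₂ = (p₂, q₂, f₂) with candidate solution u₂, where u, u₁, u₂ are differentiable on ℝⁿ and all products appearing in the integrals below (pᵢ times ∇u·∇u, ∇u₁·∇u₁, ∇u₂·∇u₂, ∇u·∇uⱼ, ∇u₁·∇u₂; qᵢ times u², u₁², u₂², u u_j, u₁u₂; fᵢ times u, u₁, u₂ for i, j ∈ {1,2}) are integrable on Ω. Suppose the weak-solution identity for u₁ with coefficients (p₁,q₁,f₁) holds tested against v = u − u₁ and against v = u₂ − u₁, and the weak-solution identity for u₂ with coefficients (p₂,q₂,f₂) holds tested against v = u − u₂ and against v = u₂ − u₁. Then G_λ(c₁) − G_λ(c₂) = ∫_Ω ( (p₁ − p₂)(|∇u|² − ∇u₁·∇u₂) + λ (q₁ − q₂)(u² − u₁u₂) − 2 (f₁ − f₂)(u − (u₁ + u₂)/2) ) dx. -/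

import Mathlib

open MeasureTheory Set
open scoped RealInnerProductSpace


lemma gradSub {n : ℕ} (a b : EuclideanSpace ℝ (Fin n) → ℝ)
    (ha : Differentiable ℝ a) (hb : Differentiable ℝ b) (x : EuclideanSpace ℝ (Fin n)) :
    gradient (fun y => a y - b y) x = gradient a x - gradient b x := by
  have h1 := (ha x).hasGradientAt
  have h2 := (hb x).hasGradientAt
  have h : HasGradientAt (fun y => a y - b y) (gradient a x - gradient b x) x := by
    rw [hasGradientAt_iff_hasFDerivAt]
    exact (h1.hasFDerivAt.sub h2.hasFDerivAt).congr_fderiv (map_sub _ _ _).symm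
  exact h.gradient

lemma int_comb3 {α : Type*} [MeasurableSpace α] (μ : Measure α) (f g h : α → ℝ)
    (hf : Integrable f μ) (hg : Integrable g μ) (hh : Integrable h μ) :
    ∫ x, (f x - 2 * g x + h x) ∂μ = (∫ x, f x ∂μ) - 2 * (∫ x, g x ∂μ) + ∫ x, h x ∂μ := by
  have hg2 : Integrable (fun x => 2 * g x) μ := hg.const_mul 2
  have hfg : Integrable (fun x => f x - 2 * g x) μ := hf.sub hg2
  rw [integral_add hfg hh, integral_sub hf hg2, integral_const_mul]

lemma int_sub' {α : Type*} [MeasurableSpace α] (μ : Measure α) (f g : α → ℝ)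
    (hf : Integrable f μ) (hg : Integrable g μ) :
    ∫ x, (f x - g x) ∂μ = (∫ x, f x ∂μ) - ∫ x, g x ∂μ := integral_sub hf hg

lemma int_congr' {α : Type*} [MeasurableSpace α] (μ : Measure α) (f g : α → ℝ)
    (h : ∀ x, f x = g x) : ∫ x, f x ∂μ = ∫ x, g x ∂μ := by
  congr 1; exact funext h

lemma helperEnergy {n : ℕ} (μ : Measure (EuclideanSpace ℝ (Fin n))) (lam : ℝ)
    (r s a b : EuclideanSpace ℝ (Fin n) → ℝ)
    (ha : Differentiable ℝ a) (hb : Differentiable ℝ b)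
    (h1 : Integrable (fun x => r x * ⟪gradient a x, gradient a x⟫) μ)
    (h2 : Integrable (fun x => r x * ⟪gradient a x, gradient b x⟫) μ)
    (h3 : Integrable (fun x => r x * ⟪gradient b x, gradient b x⟫) μ)
    (h4 : Integrable (fun x => s x * (a x * a x)) μ)
    (h5 : Integrable (fun x => s x * (a x * b x)) μ)
    (h6 : Integrable (fun x => s x * (b x * b x)) μ) :
    ∫ x, (r x * ‖gradient (fun y => a y - b y) x‖ ^ 2 + lam * (s x * (a x - b x) ^ 2)) ∂μ
      = ((∫ x, r x * ⟪gradient a x, gradient a x⟫ ∂μ)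
          - 2 * (∫ x, r x * ⟪gradient a x, gradient b x⟫ ∂μ)
          + (∫ x, r x * ⟪gradient b x, gradient b x⟫ ∂μ))
        + lam * ((∫ x, s x * (a x * a x) ∂μ) - 2 * (∫ x, s x * (a x * b x) ∂μ)
          + (∫ x, s x * (b x * b x) ∂μ)) := by
  have key : (fun x => r x * ‖gradient (fun y => a y - b y) x‖ ^ 2 + lam * (s x * (a x - b x) ^ 2))
      = fun x => ((r x * ⟪gradient a x, gradient a x⟫ - 2 * (r x * ⟪gradient a x, gradient b x⟫)
          + r x * ⟪gradient b x, gradient b x⟫)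
        + lam * (s x * (a x * a x) - 2 * (s x * (a x * b x)) + s x * (b x * b x))) := by
    funext x
    rw [gradSub a b ha hb x]
    rw [show ‖gradient a x - gradient b x‖ ^ 2
        = ⟪gradient a x - gradient b x, gradient a x - gradient b x⟫
      from (real_inner_self_eq_norm_sq _).symm]
    simp only [inner_sub_left, inner_sub_right, real_inner_comm (gradient b x) (gradient a x)]
    ring
  rw [key]
  have hA : Integrable (fun x => r x * ⟪gradient a x, gradient a x⟫
      - 2 * (r x * ⟪gradient a x, gradient b x⟫) + r x * ⟪gradient b x, gradient b x⟫) μ :=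
    (h1.sub (h2.const_mul 2)).add h3
  have hB : Integrable (fun x => s x * (a x * a x) - 2 * (s x * (a x * b x))
      + s x * (b x * b x)) μ :=
    (h4.sub (h5.const_mul 2)).add h6
  rw [integral_add hA (hB.const_mul lam), integral_const_mul,
    int_comb3 μ _ _ _ h1 h2 h3, int_comb3 μ _ _ _ h4 h5 h6]

lemma helperWeak {n : ℕ} (μ : Measure (EuclideanSpace ℝ (Fin n))) (lam : ℝ)
    (r s c a b : EuclideanSpace ℝ (Fin n) → ℝ)
    (ha : Differentiable ℝ a) (hb : Differentiable ℝ b)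
    (h1 : Integrable (fun x => r x * ⟪gradient a x, gradient c x⟫) μ)
    (h2 : Integrable (fun x => r x * ⟪gradient b x, gradient c x⟫) μ)
    (h3 : Integrable (fun x => s x * (a x * c x)) μ)
    (h4 : Integrable (fun x => s x * (b x * c x)) μ) :
    ∫ x, (r x * ⟪gradient c x, gradient (fun y => a y - b y) x⟫
        + lam * s x * c x * (a x - b x)) ∂μ
      = ((∫ x, r x * ⟪gradient a x, gradient c x⟫ ∂μ)
          - ∫ x, r x * ⟪gradient b x, gradient c x⟫ ∂μ)
        + lam * ((∫ x, s x * (a x * c x) ∂μ) - ∫ x, s x * (b x * c x) ∂μ) := by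
  have key : (fun x => r x * ⟪gradient c x, gradient (fun y => a y - b y) x⟫
        + lam * s x * c x * (a x - b x))
      = fun x => ((r x * ⟪gradient a x, gradient c x⟫ - r x * ⟪gradient b x, gradient c x⟫)
        + lam * (s x * (a x * c x) - s x * (b x * c x))) := by
    funext x
    rw [gradSub a b ha hb x]
    simp only [inner_sub_right, real_inner_comm (gradient c x)]
    ring
  have hA : Integrable (fun x => r x * ⟪gradient a x, gradient c x⟫
      - r x * ⟪gradient b x, gradient c x⟫) μ := h1.sub h2
  have hB : Integrable (fun x => s x * (a x * c x) - s x * (b x * c x)) μ := h3.sub h4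
  rw [key, integral_add hA (hB.const_mul lam), integral_const_mul,
    int_sub' μ _ _ h1 h2, int_sub' μ _ _ h3 h4]

lemma helperF {n : ℕ} (μ : Measure (EuclideanSpace ℝ (Fin n)))
    (g a b : EuclideanSpace ℝ (Fin n) → ℝ)
    (h1 : Integrable (fun x => g x * a x) μ)
    (h2 : Integrable (fun x => g x * b x) μ) :
    ∫ x, g x * (a x - b x) ∂μ = (∫ x, g x * a x ∂μ) - ∫ x, g x * b x ∂μ := by
  rw [int_congr' μ _ (fun x => g x * a x - g x * b x) (fun x => by ring),
    int_sub' μ _ _ h1 h2]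


lemma helperRHS {n : ℕ} (μ : Measure (EuclideanSpace ℝ (Fin n))) (lam : ℝ)
    (u u₁ u₂ r₁ r₂ s₁ s₂ g₁ g₂ : EuclideanSpace ℝ (Fin n) → ℝ)
    (hP1 : Integrable (fun x => r₁ x * ⟪gradient u x, gradient u x⟫) μ)
    (hP1' : Integrable (fun x => r₁ x * ⟪gradient u₁ x, gradient u₂ x⟫) μ)
    (hP2 : Integrable (fun x => r₂ x * ⟪gradient u x, gradient u x⟫) μ)
    (hP2' : Integrable (fun x => r₂ x * ⟪gradient u₁ x, gradient u₂ x⟫) μ)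
    (hQ1 : Integrable (fun x => s₁ x * (u x * u x)) μ)
    (hQ1' : Integrable (fun x => s₁ x * (u₁ x * u₂ x)) μ)
    (hQ2 : Integrable (fun x => s₂ x * (u x * u x)) μ)
    (hQ2' : Integrable (fun x => s₂ x * (u₁ x * u₂ x)) μ)
    (hG1 : Integrable (fun x => g₁ x * u x) μ)
    (hG1a : Integrable (fun x => g₁ x * u₁ x) μ)
    (hG1b : Integrable (fun x => g₁ x * u₂ x) μ)
    (hG2 : Integrable (fun x => g₂ x * u x) μ)
    (hG2a : Integrable (fun x => g₂ x * u₁ x) μ)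
    (hG2b : Integrable (fun x => g₂ x * u₂ x) μ) :
    ∫ x, ((r₁ x - r₂ x) * (‖gradient u x‖ ^ 2 - ⟪gradient u₁ x, gradient u₂ x⟫)
        + lam * ((s₁ x - s₂ x) * ((u x) ^ 2 - u₁ x * u₂ x))
        - 2 * (g₁ x - g₂ x) * (u x - (u₁ x + u₂ x) / 2)) ∂μ
      = (((∫ x, r₁ x * ⟪gradient u x, gradient u x⟫ ∂μ)
            - ∫ x, r₁ x * ⟪gradient u₁ x, gradient u₂ x⟫ ∂μ)
          - ((∫ x, r₂ x * ⟪gradient u x, gradient u x⟫ ∂μ)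
            - ∫ x, r₂ x * ⟪gradient u₁ x, gradient u₂ x⟫ ∂μ))
        + lam * (((∫ x, s₁ x * (u x * u x) ∂μ) - ∫ x, s₁ x * (u₁ x * u₂ x) ∂μ)
          - ((∫ x, s₂ x * (u x * u x) ∂μ) - ∫ x, s₂ x * (u₁ x * u₂ x) ∂μ))
        + ((2 * (∫ x, g₂ x * u x ∂μ) - ((∫ x, g₂ x * u₁ x ∂μ) + ∫ x, g₂ x * u₂ x ∂μ))
          - (2 * (∫ x, g₁ x * u x ∂μ) - ((∫ x, g₁ x * u₁ x ∂μ) + ∫ x, g₁ x * u₂ x ∂μ))) := by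
  have hP1f : Integrable (fun x => r₁ x * ⟪gradient u x, gradient u x⟫
      - r₁ x * ⟪gradient u₁ x, gradient u₂ x⟫) μ := hP1.sub hP1'
  have hP2f : Integrable (fun x => r₂ x * ⟪gradient u x, gradient u x⟫
      - r₂ x * ⟪gradient u₁ x, gradient u₂ x⟫) μ := hP2.sub hP2'
  have hQ1f : Integrable (fun x => s₁ x * (u x * u x) - s₁ x * (u₁ x * u₂ x)) μ := hQ1.sub hQ1'
  have hQ2f : Integrable (fun x => s₂ x * (u x * u x) - s₂ x * (u₁ x * u₂ x)) μ := hQ2.sub hQ2'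
  have hG1f : Integrable (fun x => 2 * (g₁ x * u x) - (g₁ x * u₁ x + g₁ x * u₂ x)) μ :=
    (hG1.const_mul 2).sub (hG1a.add hG1b)
  have hG2f : Integrable (fun x => 2 * (g₂ x * u x) - (g₂ x * u₁ x + g₂ x * u₂ x)) μ :=
    (hG2.const_mul 2).sub (hG2a.add hG2b)
  have hPP : Integrable (fun x => (r₁ x * ⟪gradient u x, gradient u x⟫
      - r₁ x * ⟪gradient u₁ x, gradient u₂ x⟫)
      - (r₂ x * ⟪gradient u x, gradient u x⟫ - r₂ x * ⟪gradient u₁ x, gradient u₂ x⟫)) μ :=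
    hP1f.sub hP2f
  have hQQ : Integrable (fun x => (s₁ x * (u x * u x) - s₁ x * (u₁ x * u₂ x))
      - (s₂ x * (u x * u x) - s₂ x * (u₁ x * u₂ x))) μ := hQ1f.sub hQ2f
  have hFF : Integrable (fun x => (2 * (g₂ x * u x) - (g₂ x * u₁ x + g₂ x * u₂ x))
      - (2 * (g₁ x * u x) - (g₁ x * u₁ x + g₁ x * u₂ x))) μ := hG2f.sub hG1f
  have key : (fun x => (r₁ x - r₂ x) * (‖gradient u x‖ ^ 2 - ⟪gradient u₁ x, gradient u₂ x⟫)
        + lam * ((s₁ x - s₂ x) * ((u x) ^ 2 - u₁ x * u₂ x))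
        - 2 * (g₁ x - g₂ x) * (u x - (u₁ x + u₂ x) / 2))
      = fun x => (((r₁ x * ⟪gradient u x, gradient u x⟫ - r₁ x * ⟪gradient u₁ x, gradient u₂ x⟫)
          - (r₂ x * ⟪gradient u x, gradient u x⟫ - r₂ x * ⟪gradient u₁ x, gradient u₂ x⟫))
        + lam * ((s₁ x * (u x * u x) - s₁ x * (u₁ x * u₂ x))
          - (s₂ x * (u x * u x) - s₂ x * (u₁ x * u₂ x))))
        + ((2 * (g₂ x * u x) - (g₂ x * u₁ x + g₂ x * u₂ x))
          - (2 * (g₁ x * u x) - (g₁ x * u₁ x + g₁ x * u₂ x))) := by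
    funext x
    rw [show ‖gradient u x‖ ^ 2 = ⟪gradient u x, gradient u x⟫
      from (real_inner_self_eq_norm_sq _).symm]
    ring
  have hPQ : Integrable (fun x => ((r₁ x * ⟪gradient u x, gradient u x⟫
      - r₁ x * ⟪gradient u₁ x, gradient u₂ x⟫)
      - (r₂ x * ⟪gradient u x, gradient u x⟫ - r₂ x * ⟪gradient u₁ x, gradient u₂ x⟫))
      + lam * ((s₁ x * (u x * u x) - s₁ x * (u₁ x * u₂ x))
        - (s₂ x * (u x * u x) - s₂ x * (u₁ x * u₂ x)))) μ := hPP.add (hQQ.const_mul lam)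
  have hG1c : Integrable (fun x => 2 * (g₁ x * u x)) μ := hG1.const_mul 2
  have hG2c : Integrable (fun x => 2 * (g₂ x * u x)) μ := hG2.const_mul 2
  have hG1ab : Integrable (fun x => g₁ x * u₁ x + g₁ x * u₂ x) μ := hG1a.add hG1b
  have hG2ab : Integrable (fun x => g₂ x * u₁ x + g₂ x * u₂ x) μ := hG2a.add hG2b
  rw [key, integral_add hPQ hFF,
    integral_add hPP (hQQ.const_mul lam), integral_const_mul,
    int_sub' μ _ _ hP1f hP2f, int_sub' μ _ _ hP1 hP1', int_sub' μ _ _ hP2 hP2',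
    int_sub' μ _ _ hQ1f hQ2f, int_sub' μ _ _ hQ1 hQ1', int_sub' μ _ _ hQ2 hQ2',
    int_sub' μ _ _ hG2f hG1f,
    int_sub' μ _ _ hG2c hG2ab, integral_const_mul,
    integral_add hG2a hG2b,
    int_sub' μ _ _ hG1c hG1ab, integral_const_mul,
    integral_add hG1a hG1b]


/-- The difference formula
`G_λ(c₁) - G_λ(c₂) = ∫_Ω ((p₁-p₂)(|∇u|² - ∇u₁·∇u₂) + λ(q₁-q₂)(u² - u₁u₂)
  - 2(f₁-f₂)(u - (u₁+u₂)/2)) dx`,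
under the stated integrability assumptions and the weak-solution identities for `u₁` (with
coefficients `(p₁,q₁,f₁)`) tested against `u - u₁` and `u₂ - u₁`, and for `u₂` (with coefficients
`(p₂,q₂,f₂)`) tested against `u - u₂` and `u₂ - u₁`. -/
theorem Glambda_difference_formula {n : ℕ} (hn : 1 ≤ n)
    (Ω : Set (EuclideanSpace ℝ (Fin n))) (hΩ : IsOpen Ω)
    (lam : ℝ) (u u₁ u₂ p₁ q₁ f₁ p₂ q₂ f₂ : EuclideanSpace ℝ (Fin n) → ℝ)
    (hu : Differentiable ℝ u) (hu₁ : Differentiable ℝ u₁) (hu₂ : Differentiable ℝ u₂)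
    (hIp : ∀ r ∈ ({p₁, p₂} : Set (EuclideanSpace ℝ (Fin n) → ℝ)),
      ∀ a ∈ ({u, u₁, u₂} : Set (EuclideanSpace ℝ (Fin n) → ℝ)),
      ∀ b ∈ ({u, u₁, u₂} : Set (EuclideanSpace ℝ (Fin n) → ℝ)),
        IntegrableOn (fun x => r x * ⟪gradient a x, gradient b x⟫) Ω)
    (hIq : ∀ r ∈ ({q₁, q₂} : Set (EuclideanSpace ℝ (Fin n) → ℝ)),
      ∀ a ∈ ({u, u₁, u₂} : Set (EuclideanSpace ℝ (Fin n) → ℝ)),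
      ∀ b ∈ ({u, u₁, u₂} : Set (EuclideanSpace ℝ (Fin n) → ℝ)),
        IntegrableOn (fun x => r x * (a x * b x)) Ω)
    (hIf : ∀ r ∈ ({f₁, f₂} : Set (EuclideanSpace ℝ (Fin n) → ℝ)),
      ∀ a ∈ ({u, u₁, u₂} : Set (EuclideanSpace ℝ (Fin n) → ℝ)),
        IntegrableOn (fun x => r x * a x) Ω)
    (hweak1a : ∫ x in Ω, (p₁ x * ⟪gradient u₁ x, gradient (fun y => u y - u₁ y) x⟫
          + lam * q₁ x * u₁ x * (u x - u₁ x))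
        = ∫ x in Ω, f₁ x * (u x - u₁ x))
    (hweak1b : ∫ x in Ω, (p₁ x * ⟪gradient u₁ x, gradient (fun y => u₂ y - u₁ y) x⟫
          + lam * q₁ x * u₁ x * (u₂ x - u₁ x))
        = ∫ x in Ω, f₁ x * (u₂ x - u₁ x))
    (hweak2a : ∫ x in Ω, (p₂ x * ⟪gradient u₂ x, gradient (fun y => u y - u₂ y) x⟫
          + lam * q₂ x * u₂ x * (u x - u₂ x))
        = ∫ x in Ω, f₂ x * (u x - u₂ x))
    (hweak2b : ∫ x in Ω, (p₂ x * ⟪gradient u₂ x, gradient (fun y => u₂ y - u₁ y) x⟫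
          + lam * q₂ x * u₂ x * (u₂ x - u₁ x))
        = ∫ x in Ω, f₂ x * (u₂ x - u₁ x)) :
    (∫ x in Ω, (p₁ x * ‖gradient (fun y => u y - u₁ y) x‖ ^ 2
          + lam * (q₁ x * (u x - u₁ x) ^ 2)))
      - (∫ x in Ω, (p₂ x * ‖gradient (fun y => u y - u₂ y) x‖ ^ 2
          + lam * (q₂ x * (u x - u₂ x) ^ 2)))
      = ∫ x in Ω, ((p₁ x - p₂ x) * (‖gradient u x‖ ^ 2 - ⟪gradient u₁ x, gradient u₂ x⟫)
          + lam * ((q₁ x - q₂ x) * ((u x) ^ 2 - u₁ x * u₂ x))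
          - 2 * (f₁ x - f₂ x) * (u x - (u₁ x + u₂ x) / 2)) := by
  classical
  set μ := (volume : Measure (EuclideanSpace ℝ (Fin n))).restrict Ω with hμ
  have mp1 : p₁ ∈ ({p₁, p₂} : Set (EuclideanSpace ℝ (Fin n) → ℝ)) := by simp
  have mp2 : p₂ ∈ ({p₁, p₂} : Set (EuclideanSpace ℝ (Fin n) → ℝ)) := by simp
  have mq1 : q₁ ∈ ({q₁, q₂} : Set (EuclideanSpace ℝ (Fin n) → ℝ)) := by simp
  have mq2 : q₂ ∈ ({q₁, q₂} : Set (EuclideanSpace ℝ (Fin n) → ℝ)) := by simp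
  have mf1 : f₁ ∈ ({f₁, f₂} : Set (EuclideanSpace ℝ (Fin n) → ℝ)) := by simp
  have mf2 : f₂ ∈ ({f₁, f₂} : Set (EuclideanSpace ℝ (Fin n) → ℝ)) := by simp
  have mu : u ∈ ({u, u₁, u₂} : Set (EuclideanSpace ℝ (Fin n) → ℝ)) := by simp
  have mu1 : u₁ ∈ ({u, u₁, u₂} : Set (EuclideanSpace ℝ (Fin n) → ℝ)) := by simp
  have mu2 : u₂ ∈ ({u, u₁, u₂} : Set (EuclideanSpace ℝ (Fin n) → ℝ)) := by simp
  -- weak identities in expanded form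
  rw [helperWeak μ lam p₁ q₁ u₁ u u₁ hu hu₁ (hIp p₁ mp1 u mu u₁ mu1)
      (hIp p₁ mp1 u₁ mu1 u₁ mu1) (hIq q₁ mq1 u mu u₁ mu1) (hIq q₁ mq1 u₁ mu1 u₁ mu1),
    helperF μ f₁ u u₁ (hIf f₁ mf1 u mu) (hIf f₁ mf1 u₁ mu1)] at hweak1a
  rw [helperWeak μ lam p₁ q₁ u₁ u₂ u₁ hu₂ hu₁ (hIp p₁ mp1 u₂ mu2 u₁ mu1)
      (hIp p₁ mp1 u₁ mu1 u₁ mu1) (hIq q₁ mq1 u₂ mu2 u₁ mu1) (hIq q₁ mq1 u₁ mu1 u₁ mu1),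
    helperF μ f₁ u₂ u₁ (hIf f₁ mf1 u₂ mu2) (hIf f₁ mf1 u₁ mu1)] at hweak1b
  rw [helperWeak μ lam p₂ q₂ u₂ u u₂ hu hu₂ (hIp p₂ mp2 u mu u₂ mu2)
      (hIp p₂ mp2 u₂ mu2 u₂ mu2) (hIq q₂ mq2 u mu u₂ mu2) (hIq q₂ mq2 u₂ mu2 u₂ mu2),
    helperF μ f₂ u u₂ (hIf f₂ mf2 u mu) (hIf f₂ mf2 u₂ mu2)] at hweak2a
  rw [helperWeak μ lam p₂ q₂ u₂ u₂ u₁ hu₂ hu₁ (hIp p₂ mp2 u₂ mu2 u₂ mu2)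
      (hIp p₂ mp2 u₁ mu1 u₂ mu2) (hIq q₂ mq2 u₂ mu2 u₂ mu2) (hIq q₂ mq2 u₁ mu1 u₂ mu2),
    helperF μ f₂ u₂ u₁ (hIf f₂ mf2 u₂ mu2) (hIf f₂ mf2 u₁ mu1)] at hweak2b
  -- expand the two energy integrals and the right-hand side
  rw [helperEnergy μ lam p₁ q₁ u u₁ hu hu₁ (hIp p₁ mp1 u mu u mu) (hIp p₁ mp1 u mu u₁ mu1)
      (hIp p₁ mp1 u₁ mu1 u₁ mu1) (hIq q₁ mq1 u mu u mu) (hIq q₁ mq1 u mu u₁ mu1)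
      (hIq q₁ mq1 u₁ mu1 u₁ mu1),
    helperEnergy μ lam p₂ q₂ u u₂ hu hu₂ (hIp p₂ mp2 u mu u mu) (hIp p₂ mp2 u mu u₂ mu2)
      (hIp p₂ mp2 u₂ mu2 u₂ mu2) (hIq q₂ mq2 u mu u mu) (hIq q₂ mq2 u mu u₂ mu2)
      (hIq q₂ mq2 u₂ mu2 u₂ mu2),
    helperRHS μ lam u u₁ u₂ p₁ p₂ q₁ q₂ f₁ f₂ (hIp p₁ mp1 u mu u mu)
      (hIp p₁ mp1 u₁ mu1 u₂ mu2) (hIp p₂ mp2 u mu u mu) (hIp p₂ mp2 u₁ mu1 u₂ mu2)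
      (hIq q₁ mq1 u mu u mu) (hIq q₁ mq1 u₁ mu1 u₂ mu2) (hIq q₂ mq2 u mu u mu)
      (hIq q₂ mq2 u₁ mu1 u₂ mu2) (hIf f₁ mf1 u mu) (hIf f₁ mf1 u₁ mu1) (hIf f₁ mf1 u₂ mu2)
      (hIf f₂ mf2 u mu) (hIf f₂ mf2 u₁ mu1) (hIf f₂ mf2 u₂ mu2)]
  -- symmetry facts
  have commp : (∫ x, p₁ x * ⟪gradient u₂ x, gradient u₁ x⟫ ∂μ)
      = ∫ x, p₁ x * ⟪gradient u₁ x, gradient u₂ x⟫ ∂μ :=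
    int_congr' μ _ _ (fun x => by rw [real_inner_comm])
  have commq : (∫ x, q₁ x * (u₂ x * u₁ x) ∂μ) = ∫ x, q₁ x * (u₁ x * u₂ x) ∂μ :=
    int_congr' μ _ _ (fun x => by ring)
  linear_combination (-2 : ℝ) * hweak1a + hweak1b + 2 * hweak2a + hweak2b - commp - lam * commq
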